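/- (Sauer-Shelah Lemma) Let (X, F) be a set system of VC-dimension k, i.e. k is the largest size of a subset of X shattered by F. Then for every finite subset A ⊆ X of size n, the number of sets in the projection F_A = { F ∩ A : F ∈ F } is at most ∑_{i=0}^{k} C(n,i). -/

import Mathlib

/-- A set system `F` on `X` shatters a finite set `A` if every subset of `A` is cut out
by a member of `F`, i.e. the projection of `F` onto `A` is the full power set of `A`. -/
def Shatters {X : Type*} (F : Set (Set X)) (A : Finset X) : Prop :=
  ∀ B ⊆ A, ∃ C ∈ F, ∀ a ∈ A, (a ∈ C ↔ a ∈ B)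

/-- Sauer-Shelah Lemma: if `F` has VC-dimension `k` (i.e. `k` is the largest size of a
subset shattered by `F`), then for every finite `A ⊆ X` of size `n` the projection
`F_A = { C ∩ A : C ∈ F }` has at most `∑_{i=0}^{k} C(n,i)` members. -/
theorem sauer_shelah {X : Type*} (F : Set (Set X)) (k : ℕ)
    (hshat : ∃ A : Finset X, A.card = k ∧ Shatters F A)
    (hmax : ∀ A : Finset X, Shatters F A → A.card ≤ k)
    (A : Finset X) (n : ℕ) (hA : A.card = n) :
    {B : Set X | ∃ C ∈ F, B = C ∩ ↑A}.ncard ≤ ∑ i ∈ Finset.range (k + 1), n.choose i := by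
  classical
  set α := {x // x ∈ A}
  -- the trace family on the subtype
  set 𝒜 : Finset (Finset α) :=
    Finset.univ.filter (fun s : Finset α => ∃ C ∈ F, ∀ a : α, a ∈ s ↔ (a : X) ∈ C) with h𝒜
  have hmem : ∀ s : Finset α, s ∈ 𝒜 ↔ ∃ C ∈ F, ∀ a : α, a ∈ s ↔ (a : X) ∈ C := by
    intro s; simp [h𝒜]
  -- Step 1: ncard of the projection ≤ #𝒜
  have h1 : {B : Set X | ∃ C ∈ F, B = C ∩ ↑A}.ncard ≤ 𝒜.card := by
    have := Set.ncard_le_ncard_of_injOn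
      (f := fun B : Set X => Finset.univ.filter (fun a : α => (a : X) ∈ B))
      (s := {B : Set X | ∃ C ∈ F, B = C ∩ ↑A}) (t := ↑𝒜) ?_ ?_ 𝒜.finite_toSet
    · simpa using this
    · rintro B ⟨C, hC, rfl⟩
      refine Finset.mem_coe.2 ((hmem _).2 ⟨C, hC, fun a => ?_⟩)
      simp [a.2]
    · rintro B₁ ⟨C₁, -, rfl⟩ B₂ ⟨C₂, -, rfl⟩ h
      simp only at h
      ext x
      constructor
      · rintro ⟨hx, hxA⟩
        have h' := Finset.ext_iff.1 h ⟨x, hxA⟩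
        simp only [Finset.mem_filter, Finset.mem_univ, true_and, Set.mem_inter_iff] at h'
        exact ⟨(h'.1 ⟨hx, hxA⟩).1, hxA⟩
      · rintro ⟨hx, hxA⟩
        have h' := Finset.ext_iff.1 h ⟨x, hxA⟩
        simp only [Finset.mem_filter, Finset.mem_univ, true_and, Set.mem_inter_iff] at h'
        exact ⟨(h'.2 ⟨hx, hxA⟩).1, hxA⟩
  -- Step 2: vcDim 𝒜 ≤ k
  have h2 : 𝒜.vcDim ≤ k := by
    refine Finset.sup_le fun s hs => ?_
    have hshat' : 𝒜.Shatters s := Finset.mem_shatterer.1 hs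
    set A' : Finset X := s.image (fun a : α => (a : X)) with hA'
    have hcard : A'.card = s.card := Finset.card_image_of_injective _ Subtype.val_injective
    have : Shatters F A' := by
      intro B hB
      obtain ⟨u, hu, hsu⟩ := hshat' (t := s.filter (fun a : α => (a : X) ∈ B))
        (Finset.filter_subset _ _)
      obtain ⟨C, hC, hCu⟩ := (hmem u).1 hu
      refine ⟨C, hC, ?_⟩
      rintro x hx
      rw [hA', Finset.mem_image] at hx
      obtain ⟨a, ha, rfl⟩ := hx
      have h1 : (a : X) ∈ C ↔ a ∈ u := (hCu a).symm
      have h2 : a ∈ u ↔ a ∈ s ∩ u := by simp [ha]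
      rw [hsu] at h2
      rw [h1, h2, Finset.mem_filter]
      simp [ha]
    have := hmax A' this
    omega
  -- Step 3: combine with the mathlib Sauer-Shelah
  have h3 : 𝒜.card ≤ ∑ i ∈ Finset.Iic 𝒜.vcDim, (Fintype.card α).choose i :=
    le_trans (Finset.card_le_card_shatterer 𝒜) Finset.card_shatterer_le_sum_vcDim
  have hcardα : Fintype.card α = n := by rw [Fintype.card_coe, hA]
  have h4 : ∑ i ∈ Finset.Iic 𝒜.vcDim, (Fintype.card α).choose i ≤
      ∑ i ∈ Finset.range (k + 1), n.choose i := by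
    rw [hcardα]
    refine Finset.sum_le_sum_of_subset fun i hi => ?_
    simp only [Finset.mem_Iic] at hi
    simp only [Finset.mem_range]
    omega
  omega
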